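/- Let S be a set of positive integers such that the sum over s ∈ S of 1/s converges. Then the set of nonmultiples N(S) = {n ≥ 1 : s ∤ n for all s ∈ S} has an asymptotic density. -/

import Mathlib

open scoped BigOperators

/-- `fibZ m` is the rank of appearance of `m`: the least positive `n` with `m ∣ F_n`. -/
noncomputable def fibZ (m : ℕ) : ℕ := sInf {n : ℕ | 0 < n ∧ m ∣ Nat.fib n}

/-- `fibL m = lcm(m, z(m))`. -/
noncomputable def fibL (m : ℕ) : ℕ := Nat.lcm m (fibZ m)

/-- `countIn S x` is the number of elements of `S` in `[1, x]`. -/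
noncomputable def countIn (S : Set ℕ) (x : ℝ) : ℕ :=
  (S ∩ {n : ℕ | 1 ≤ n ∧ (n : ℝ) ≤ x}).ncard

/-- `S` has asymptotic density `a`. -/
def HasDensity (S : Set ℕ) (a : ℝ) : Prop :=
  Filter.Tendsto (fun x : ℝ => (countIn S x : ℝ) / x) Filter.atTop (nhds a)

/-- `fibA k` is the set of positive integers `n` with `gcd(n, F_n) = k`. -/
def fibA (k : ℕ) : Set ℕ := {n : ℕ | 0 < n ∧ Nat.gcd n (Nat.fib n) = k}
open Finset Filter

section AuxDensity

attribute [local instance] Classical.propDecidable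

noncomputable def cntP (P : ℕ → Prop) (m : ℕ) : ℕ := ((Finset.Ioc 0 m).filter P).card

lemma cntP_le (P : ℕ → Prop) (m : ℕ) : cntP P m ≤ m :=
  le_trans (Finset.card_filter_le _ _) (by simp)

lemma cntP_mono (P : ℕ → Prop) {m m' : ℕ} (h : m ≤ m') : cntP P m ≤ cntP P m' :=
  Finset.card_le_card (Finset.filter_subset_filter _ (Finset.Ioc_subset_Ioc_right h))

lemma per_iter (P : ℕ → Prop) (L : ℕ) (hper : ∀ n, 0 < n → (P (n + L) ↔ P n)) :
    ∀ j n, 0 < n → (P (n + j * L) ↔ P n) := by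
  intro j
  induction j with
  | zero => intro n hn; simp
  | succ j ih =>
    intro n hn
    have h1 : n + (j + 1) * L = (n + j * L) + L := by ring
    rw [h1, hper _ (by omega), ih n hn]

lemma cntP_block (P : ℕ → Prop) (L : ℕ) (hper : ∀ n, 0 < n → (P (n + L) ↔ P n)) (j : ℕ) :
    ((Finset.Ioc (j * L) (j * L + L)).filter P).card = cntP P L := by
  have hmap : Finset.Ioc (j * L) (j * L + L)
      = (Finset.Ioc 0 L).map (addLeftEmbedding (j * L)) := by
    rw [Finset.map_add_left_Ioc]; simp
  rw [hmap, Finset.filter_map, Finset.card_map, cntP]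
  congr 1
  apply Finset.filter_congr
  intro n hn
  simp only [Finset.mem_Ioc] at hn
  have he : (addLeftEmbedding (j * L)) n = n + j * L := by
    simp [addLeftEmbedding, add_comm]
  simp only [Function.comp_apply, he]
  simp [per_iter P L hper j n hn.1]

lemma cntP_mul (P : ℕ → Prop) (L : ℕ) (hper : ∀ n, 0 < n → (P (n + L) ↔ P n)) (j : ℕ) :
    cntP P (j * L) = j * cntP P L := by
  induction j with
  | zero => simp [cntP]
  | succ j ih =>
    have hsplit : Finset.Ioc 0 ((j + 1) * L)
        = Finset.Ioc 0 (j * L) ∪ Finset.Ioc (j * L) (j * L + L) := by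
      rw [Finset.Ioc_union_Ioc_eq_Ioc (Nat.zero_le _) (Nat.le_add_right _ _)]
      congr 1; ring
    have hdisj : Disjoint ((Finset.Ioc 0 (j * L)).filter P)
        ((Finset.Ioc (j * L) (j * L + L)).filter P) := by
      rw [Finset.disjoint_left]
      intro n hn hn'
      simp only [Finset.mem_filter, Finset.mem_Ioc] at hn hn'
      omega
    rw [cntP, hsplit, Finset.filter_union, Finset.card_union_of_disjoint hdisj,
      cntP_block P L hper j]
    rw [cntP] at ih
    rw [ih]; ring

lemma cnt_per_bound (P : ℕ → Prop) (L : ℕ) (hL : 0 < L)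
    (hper : ∀ n, 0 < n → (P (n + L) ↔ P n)) (m : ℕ) :
    |(cntP P m : ℝ) - ((cntP P L : ℝ) / L) * m| ≤ L := by
  set j := m / L with hj
  have h1 : j * L ≤ m := Nat.div_mul_le_self m L
  have h2 : m ≤ (j + 1) * L := by
    have hdm : L * j + m % L = m := Nat.div_add_mod m L
    have hml : m % L < L := Nat.mod_lt m hL
    have he : (j + 1) * L = L * j + L := by ring
    omega
  set c := cntP P L with hc
  have hcL : c ≤ L := cntP_le P L
  have hlow : j * c ≤ cntP P m := by
    rw [← cntP_mul P L hper j]; exact cntP_mono P h1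
  have hhigh : cntP P m ≤ (j + 1) * c := by
    rw [← cntP_mul P L hper (j + 1)]; exact cntP_mono P h2
  have hLr : (0 : ℝ) < L := by exact_mod_cast hL
  have hcr : (0 : ℝ) ≤ c := Nat.cast_nonneg c
  have hb1 : (j : ℝ) * c ≤ (c : ℝ) / L * m := by
    rw [div_mul_eq_mul_div, le_div_iff₀ hLr]
    have : (j : ℝ) * L ≤ m := by exact_mod_cast h1
    nlinarith
  have hb2 : (c : ℝ) / L * m ≤ ((j : ℝ) + 1) * c := by
    rw [div_mul_eq_mul_div, div_le_iff₀ hLr]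
    have : (m : ℝ) ≤ ((j : ℝ) + 1) * L := by exact_mod_cast h2
    nlinarith
  have hl' : (j : ℝ) * c ≤ cntP P m := by exact_mod_cast hlow
  have hh' : (cntP P m : ℝ) ≤ ((j : ℝ) + 1) * c := by exact_mod_cast hhigh
  have hcLr : (c : ℝ) ≤ L := by exact_mod_cast hcL
  rw [abs_le]
  constructor <;> nlinarith


lemma cntP_mono_pred {P Q : ℕ → Prop} (hPQ : ∀ n, P n → Q n) (m : ℕ) :
    cntP P m ≤ cntP Q m :=
  Finset.card_le_card (Finset.monotone_filter_right _ (fun n _ => hPQ n))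

lemma cntP_dvd (s m : ℕ) : cntP (fun n => s ∣ n) m = m / s := by
  rw [cntP, Finset.filter_congr_decidable]
  exact Nat.Ioc_filter_dvd_card_eq_div m s

lemma cntP_split (P Q : ℕ → Prop) (R : ℕ → ℕ → Prop) (m : ℕ) (T : Finset ℕ)
    (hcover : ∀ n, 0 < n → n ≤ m → P n → Q n ∨ ∃ s ∈ T, R s n) :
    cntP P m ≤ cntP Q m + ∑ s ∈ T, cntP (R s) m := by
  have hsub : (Finset.Ioc 0 m).filter P ⊆
      ((Finset.Ioc 0 m).filter Q) ∪ T.biUnion (fun s => (Finset.Ioc 0 m).filter (R s)) := by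
    intro n hn
    simp only [Finset.mem_filter, Finset.mem_Ioc] at hn
    obtain ⟨⟨hn0, hnm⟩, hP⟩ := hn
    rcases hcover n hn0 hnm hP with hQ | ⟨s, hsT, hR⟩
    · exact Finset.mem_union_left _ (Finset.mem_filter.mpr ⟨Finset.mem_Ioc.mpr ⟨hn0, hnm⟩, hQ⟩)
    · exact Finset.mem_union_right _ (Finset.mem_biUnion.mpr
        ⟨s, hsT, Finset.mem_filter.mpr ⟨Finset.mem_Ioc.mpr ⟨hn0, hnm⟩, hR⟩⟩)
  calc cntP P m ≤ (((Finset.Ioc 0 m).filter Q)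
        ∪ T.biUnion (fun s => (Finset.Ioc 0 m).filter (R s))).card :=
      Finset.card_le_card hsub
    _ ≤ ((Finset.Ioc 0 m).filter Q).card
        + (T.biUnion (fun s => (Finset.Ioc 0 m).filter (R s))).card :=
      Finset.card_union_le _ _
    _ ≤ cntP Q m + ∑ s ∈ T, cntP (R s) m := by
      unfold cntP
      gcongr
      exact Finset.card_biUnion_le

lemma countIn_eq_cntP (T : Set ℕ) {x : ℝ} (hx : 0 ≤ x) :
    countIn T x = cntP (fun n => n ∈ T) ⌊x⌋₊ := by
  have hset : T ∩ {n : ℕ | 1 ≤ n ∧ (n : ℝ) ≤ x}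
      = ↑((Finset.Ioc 0 ⌊x⌋₊).filter (fun n => n ∈ T)) := by
    ext n
    simp only [Set.mem_inter_iff, Set.mem_setOf_eq, Finset.coe_filter, Finset.mem_Ioc]
    constructor
    · rintro ⟨hT, h1, h2⟩
      exact ⟨⟨h1, Nat.le_floor h2⟩, hT⟩
    · rintro ⟨⟨h1, h2⟩, hT⟩
      exact ⟨hT, h1, le_trans (by exact_mod_cast h2) (Nat.floor_le hx)⟩
  rw [countIn, hset, Set.ncard_coe_finset, cntP]

end AuxDensity
theorem nonmultiples_density_exists (S : Set ℕ) (hS : ∀ s ∈ S, 0 < s)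
    (h : Summable (fun s : S => (1 : ℝ) / (s : ℝ))) :
    ∃ a : ℝ, HasDensity {n : ℕ | 0 < n ∧ ∀ s ∈ S, ¬ s ∣ n} a := by
  classical
  -- the summable indicator function
  set g : ℕ → ℝ := S.indicator (fun s => 1 / (s : ℝ)) with hgdef
  have hg : Summable g := summable_subtype_iff_indicator.mp h
  have hg0 : ∀ n, 0 ≤ g n := by
    intro n
    apply Set.indicator_nonneg
    intro s _
    positivity
  have hgk : ∀ k, Summable fun i => g (i + k) := fun k => (summable_nat_add_iff k).mpr hg
  -- tails
  set ε : ℕ → ℝ := fun k => ∑' i, g (i + k) with hεdef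
  have hε0 : ∀ k, 0 ≤ ε k := fun k => tsum_nonneg (fun i => hg0 _)
  have hεanti : Antitone ε := by
    apply antitone_nat_of_succ_le
    intro k
    have h1 : ε k = g (0 + k) + ∑' i, g ((i + 1) + k) := Summable.tsum_eq_zero_add (hgk k)
    have h2 : ∑' i, g ((i + 1) + k) = ε (k + 1) := by
      apply tsum_congr
      intro i
      congr 1
      omega
    have h3 := hg0 (0 + k)
    rw [h2] at h1
    linarith
  have hεto : Filter.Tendsto ε Filter.atTop (nhds 0) := tendsto_sum_nat_add g
  -- the predicates
  set NS : ℕ → Prop := fun n => 0 < n ∧ ∀ s ∈ S, ¬ s ∣ n with hNSdef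
  set NF : ℕ → ℕ → Prop := fun k n => 0 < n ∧ ∀ s ∈ S, s < k → ¬ s ∣ n with hNFdef
  set L : ℕ → ℕ := fun k => Nat.factorial k with hLdef
  have hLpos : ∀ k, 0 < L k := fun k => Nat.factorial_pos k
  have hper : ∀ k n, 0 < n → (NF k (n + L k) ↔ NF k n) := by
    intro k n hn
    have hdvd : ∀ s ∈ S, s < k → (s ∣ n + L k ↔ s ∣ n) := by
      intro s hs hsk
      have hsL : s ∣ L k := Nat.dvd_factorial (hS s hs) hsk.le
      constructor
      · intro hd
        have := Nat.dvd_sub hd hsL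
        simpa using this
      · intro hd
        exact Nat.dvd_add hd hsL
    constructor
    · rintro ⟨-, hd⟩
      exact ⟨hn, fun s hs hsk hdn => hd s hs hsk ((hdvd s hs hsk).mpr hdn)⟩
    · rintro ⟨-, hd⟩
      exact ⟨by omega, fun s hs hsk hdn => hd s hs hsk ((hdvd s hs hsk).mp hdn)⟩
  -- the finite-level densities
  set a : ℕ → ℝ := fun k => (cntP (NF k) (L k) : ℝ) / (L k) with hadef
  have ha0 : ∀ k, 0 ≤ a k := fun k => by positivity
  have ha1 : ∀ k, a k ≤ 1 := by
    intro k
    rw [hadef]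
    have hLr : (0 : ℝ) < L k := by exact_mod_cast hLpos k
    rw [div_le_one hLr]
    exact_mod_cast cntP_le _ _
  -- counting comparison between NS and NF k
  have hmonoNS : ∀ k m, cntP NS m ≤ cntP (NF k) m := by
    intro k m
    apply cntP_mono_pred
    rintro n ⟨hn, hd⟩
    exact ⟨hn, fun s hs _ => hd s hs⟩
  have hcompare : ∀ k m, (cntP (NF k) m : ℝ) ≤ (cntP NS m : ℝ) + (m : ℝ) * ε k := by
    intro k m
    set T : Finset ℕ := (Finset.Ioc 0 m).filter (fun s => s ∈ S ∧ k ≤ s) with hTdef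
    have hcover : ∀ n, 0 < n → n ≤ m → NF k n → NS n ∨ ∃ s ∈ T, s ∣ n := by
      intro n hn0 hnm hNFk
      by_cases hns : ∀ s ∈ S, ¬ s ∣ n
      · exact Or.inl ⟨hn0, hns⟩
      · right
        push_neg at hns
        obtain ⟨s, hsS, hsd⟩ := hns
        have hks : k ≤ s := le_of_not_gt (fun hlt => hNFk.2 s hsS hlt hsd)
        have hsn : s ≤ n := Nat.le_of_dvd hn0 hsd
        refine ⟨s, ?_, hsd⟩
        rw [hTdef]
        simp only [Finset.mem_filter, Finset.mem_Ioc]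
        exact ⟨⟨hS s hsS, le_trans hsn hnm⟩, hsS, hks⟩
    have hsplit := cntP_split (NF k) NS (fun s n => s ∣ n) m T hcover
    have hTs : ∑ s ∈ T, g s ≤ ε k := by
      have hTsub : T ⊆ Finset.Ico k (m + 1) := by
        intro s hs
        rw [hTdef] at hs
        simp only [Finset.mem_filter, Finset.mem_Ioc] at hs
        simp only [Finset.mem_Ico]
        omega
      calc ∑ s ∈ T, g s ≤ ∑ s ∈ Finset.Ico k (m + 1), g s :=
          Finset.sum_le_sum_of_subset_of_nonneg hTsub (fun i _ _ => hg0 i)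
        _ = ∑ i ∈ Finset.range (m + 1 - k), g (k + i) := Finset.sum_Ico_eq_sum_range g k (m + 1)
        _ = ∑ i ∈ Finset.range (m + 1 - k), g (i + k) := by
          apply Finset.sum_congr rfl
          intro i _
          congr 1
          omega
        _ ≤ ε k := Summable.sum_le_tsum _ (fun i _ => hg0 _) (hgk k)
    have hsumR : (∑ s ∈ T, ((cntP (fun n => s ∣ n) m : ℕ) : ℝ)) ≤ (m : ℝ) * ε k := by
      have hstep1 : ∀ s ∈ T, ((cntP (fun n => s ∣ n) m : ℕ) : ℝ) ≤ (m : ℝ) * g s := by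
        intro s hsT
        rw [hTdef] at hsT
        simp only [Finset.mem_filter, Finset.mem_Ioc] at hsT
        obtain ⟨⟨hs0, hsm⟩, hsS, hks⟩ := hsT
        rw [cntP_dvd s m]
        have h2 : g s = 1 / s := by rw [hgdef]; simp [Set.indicator_of_mem hsS]
        rw [h2]
        calc ((m / s : ℕ) : ℝ) ≤ (m : ℝ) / s := Nat.cast_div_le
          _ = (m : ℝ) * (1 / s) := by ring
      calc (∑ s ∈ T, ((cntP (fun n => s ∣ n) m : ℕ) : ℝ))
          ≤ ∑ s ∈ T, (m : ℝ) * g s := Finset.sum_le_sum hstep1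
        _ = (m : ℝ) * ∑ s ∈ T, g s := by rw [Finset.mul_sum]
        _ ≤ (m : ℝ) * ε k := mul_le_mul_of_nonneg_left hTs (Nat.cast_nonneg m)
    have hsplitR : (cntP (NF k) m : ℝ) ≤ (cntP NS m : ℝ)
        + ∑ s ∈ T, ((cntP (fun n => s ∣ n) m : ℕ) : ℝ) := by
      exact_mod_cast hsplit
    linarith
  -- the master estimate
  have hmaster : ∀ k, ∀ x : ℝ, 1 ≤ x →
      |(countIn {n : ℕ | 0 < n ∧ ∀ s ∈ S, ¬ s ∣ n} x : ℝ) / x - a k|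
        ≤ ε k + ((L k : ℝ) + 1) / x := by
    intro k x hx
    have hx0 : (0 : ℝ) < x := by linarith
    set m := ⌊x⌋₊ with hm
    have hmx : (m : ℝ) ≤ x := Nat.floor_le (by linarith)
    have hxm : x ≤ (m : ℝ) + 1 := le_of_lt (Nat.lt_floor_add_one x)
    have hcount : countIn {n : ℕ | 0 < n ∧ ∀ s ∈ S, ¬ s ∣ n} x = cntP NS m := by
      rw [countIn_eq_cntP _ (by linarith : (0:ℝ) ≤ x)]
      rfl
    rw [hcount]
    have hb1 : |(cntP (NF k) m : ℝ) - a k * m| ≤ (L k : ℝ) :=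
      cnt_per_bound (NF k) (L k) (hLpos k) (hper k) m
    have hb2 : (cntP NS m : ℝ) ≤ (cntP (NF k) m : ℝ) := by exact_mod_cast hmonoNS k m
    have hb3 : (cntP (NF k) m : ℝ) ≤ (cntP NS m : ℝ) + (m : ℝ) * ε k := hcompare k m
    have hεk := hε0 k
    have hak0 := ha0 k
    have hak1 := ha1 k
    have habs : |(cntP NS m : ℝ) - a k * x| ≤ x * ε k + (L k : ℝ) + 1 := by
      rw [abs_le] at hb1 ⊢
      constructor
      · nlinarith
      · nlinarith
    have heq : (cntP NS m : ℝ) / x - a k = ((cntP NS m : ℝ) - a k * x) / x := by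
      rw [sub_div, mul_div_cancel_right₀ _ (ne_of_gt hx0)]
    rw [heq, abs_div, abs_of_pos hx0, div_le_iff₀ hx0]
    have hexp : (ε k + ((L k : ℝ) + 1) / x) * x = x * ε k + ((L k : ℝ) + 1) := by
      field_simp
    rw [hexp]
    linarith
  -- the sequence a is Cauchy
  have hdiff : ∀ k l, |a k - a l| ≤ ε k + ε l := by
    intro k l
    have key : ∀ x : ℝ, 1 ≤ x → |a k - a l|
        ≤ ε k + ε l + ((L k : ℝ) + (L l : ℝ) + 2) / x := by
      intro x hx
      have h1 := hmaster k x hx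
      have h2 := hmaster l x hx
      have h3 : |a k - a l| ≤ |(countIn {n : ℕ | 0 < n ∧ ∀ s ∈ S, ¬ s ∣ n} x : ℝ) / x - a k|
          + |(countIn {n : ℕ | 0 < n ∧ ∀ s ∈ S, ¬ s ∣ n} x : ℝ) / x - a l| := by
        have h5 := abs_sub_le (a k) ((countIn {n : ℕ | 0 < n ∧ ∀ s ∈ S, ¬ s ∣ n} x : ℝ) / x) (a l)
        rwa [abs_sub_comm (a k) ((countIn {n : ℕ | 0 < n ∧ ∀ s ∈ S, ¬ s ∣ n} x : ℝ) / x)] at h5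
      have hx0 : (0 : ℝ) < x := by linarith
      have h4 : ((L k : ℝ) + 1) / x + ((L l : ℝ) + 1) / x
          = ((L k : ℝ) + (L l : ℝ) + 2) / x := by
        rw [← add_div]
        ring_nf
      linarith
    have hlim : Filter.Tendsto (fun x : ℝ => ε k + ε l + ((L k : ℝ) + (L l : ℝ) + 2) / x)
        Filter.atTop (nhds (ε k + ε l + 0)) := by
      apply Filter.Tendsto.add tendsto_const_nhds
      exact Filter.Tendsto.div_atTop tendsto_const_nhds Filter.tendsto_id
    rw [add_zero] at hlim
    exact ge_of_tendsto hlim ((Filter.eventually_ge_atTop 1).mono key)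
  have hcauchy : CauchySeq a := by
    apply cauchySeq_of_le_tendsto_0 (fun N => 2 * ε N)
    · intro n m N hn hm
      rw [Real.dist_eq]
      calc |a n - a m| ≤ ε n + ε m := hdiff n m
        _ ≤ 2 * ε N := by
          have h1 := hεanti hn
          have h2 := hεanti hm
          linarith
    · have := hεto.const_mul (2 : ℝ)
      simpa using this
  obtain ⟨α, hα⟩ := cauchySeq_tendsto_of_complete hcauchy
  refine ⟨α, ?_⟩
  rw [HasDensity, Metric.tendsto_nhds]
  intro δ hδ
  have hδ3 : 0 < δ / 3 := by linarith
  have hev1 : ∀ᶠ k in Filter.atTop, ε k < δ / 3 := hεto.eventually_lt_const hδ3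
  have hev2 : ∀ᶠ k in Filter.atTop, |a k - α| < δ / 3 := by
    have := hα.eventually (Metric.ball_mem_nhds α hδ3)
    simpa [Real.dist_eq] using this
  obtain ⟨k, hk1, hk2⟩ := (hev1.and hev2).exists
  rw [Filter.eventually_atTop]
  refine ⟨max 1 (3 * ((L k : ℝ) + 1) / δ), ?_⟩
  intro x hx
  have hx1 : (1 : ℝ) ≤ x := le_trans (le_max_left _ _) hx
  have hx2 : 3 * ((L k : ℝ) + 1) / δ ≤ x := le_trans (le_max_right _ _) hx
  have hx0 : (0 : ℝ) < x := by linarith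
  have hLx : ((L k : ℝ) + 1) / x ≤ δ / 3 := by
    rw [div_le_iff₀ hx0]
    rw [div_le_iff₀ hδ] at hx2
    linarith
  have hm := hmaster k x hx1
  rw [Real.dist_eq]
  calc |(countIn {n : ℕ | 0 < n ∧ ∀ s ∈ S, ¬ s ∣ n} x : ℝ) / x - α|
      ≤ |(countIn {n : ℕ | 0 < n ∧ ∀ s ∈ S, ¬ s ∣ n} x : ℝ) / x - a k| + |a k - α| :=
        abs_sub_le _ _ _
    _ ≤ (ε k + ((L k : ℝ) + 1) / x) + |a k - α| := by linarith
    _ < δ / 3 + δ / 3 + δ / 3 := by linarith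
    _ = δ := by ring
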